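/- arXiv:2202.00048 — 2 statements merged into one kernel-verified Lean document; each statement's English description precedes it below -/
import Mathlib

section
/- Let A, B, Q, R, σ², D_ε be LQR data with Q, R symmetric positive definite and D_ε symmetric positive semi-definite, and define for each K with ρ(A−BK) < 1: P_K as the solution of P_K = Q + KᵀRK + (A−BK)ᵀP_K(A−BK), J(K) = Tr(D_ε P_K) + σ² Tr(R), and G_K = (R + BᵀP_K B)K − BᵀP_K A. Then for any two such K, K' with ρ(A−BK) < 1 and ρ(A−BK') < 1, the difference formula holds: J(K) − J(K') = Tr[ D_{K'} ( (K−K')ᵀ G_K + G_Kᵀ (K−K') − (K−K')ᵀ (R + BᵀP_K B) (K−K') ) ], where D_{K'} = ∑_{s≥0} (A−BK')^s D_ε ((A−BK')ᵀ)^s. -/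
open Matrix Filter MeasureTheory ProbabilityTheory

open scoped Topology

/-- Spectral radius of a real matrix: the spectral radius (over `ℂ`) of its
complexification. -/
noncomputable def specRad {n : Type*} [Fintype n] [DecidableEq n]
    (M : Matrix n n ℝ) : ENNReal :=
  spectralRadius ℂ (M.map (algebraMap ℝ ℂ))

section PowAux

attribute [local instance] Matrix.linftyOpNormedAddCommGroup Matrix.linftyOpNormedRing
  Matrix.linftyOpNormedAlgebra

lemma entry_tendsto_of_specRad_lt_one {n : Type*} [Fintype n] [DecidableEq n]
    {M : Matrix n n ℝ} (h : specRad M < 1) (i j : n) :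
    Tendsto (fun s : ℕ => (M ^ s) i j) atTop (𝓝 0) := by
  haveI : CompleteSpace (Matrix n n ℂ) :=
    FiniteDimensional.complete ℂ (Matrix n n ℂ)
  set a : Matrix n n ℂ := M.map (algebraMap ℝ ℂ) with ha
  have hgel := spectrum.pow_nnnorm_pow_one_div_tendsto_nhds_spectralRadius a
  obtain ⟨r, hr1, hr2⟩ := exists_between h
  have hrtop : r ≠ ⊤ := (hr2.trans_le le_top).ne
  have hev : ∀ᶠ s : ℕ in atTop, (‖a ^ s‖₊ : ENNReal) ^ ((1 : ℝ) / s) < r :=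
    hgel.eventually_lt_const hr1
  have hr2' : r.toReal < 1 := by
    have := (ENNReal.toReal_lt_toReal hrtop (by simp)).mpr hr2
    simpa using this
  have hnorm : ∀ᶠ s : ℕ in atTop, ‖(M ^ s) i j‖ ≤ r.toReal ^ s := by
    filter_upwards [hev, eventually_ge_atTop 1] with s hs hs1
    have hs0 : (s : ℝ) ≠ 0 := by positivity
    have h2 : (‖a ^ s‖₊ : ENNReal) ≤ r ^ (s : ℝ) := by
      calc (‖a ^ s‖₊ : ENNReal) = ((‖a ^ s‖₊ : ENNReal) ^ ((1:ℝ)/s)) ^ (s:ℝ) := by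
            rw [← ENNReal.rpow_mul, one_div, inv_mul_cancel₀ hs0, ENNReal.rpow_one]
        _ ≤ r ^ (s : ℝ) := ENNReal.rpow_le_rpow hs.le (by positivity)
    rw [ENNReal.rpow_natCast] at h2
    have h3 : ‖a ^ s‖ ≤ r.toReal ^ s := by
      have := ENNReal.toReal_mono (ENNReal.pow_ne_top hrtop) h2
      simpa [ENNReal.toReal_pow] using this
    refine le_trans ?_ h3
    have hentry : ‖(a ^ s) i j‖₊ ≤ ‖a ^ s‖₊ := by
      rw [Matrix.linfty_opNNNorm_def]
      exact le_trans
        (Finset.single_le_sum (f := fun j' => ‖(a ^ s) i j'‖₊) (fun j' _ => zero_le)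
          (Finset.mem_univ j))
        (Finset.le_sup (f := fun i => ∑ j', ‖(a ^ s) i j'‖₊) (Finset.mem_univ i))
    have hpow : a ^ s = (M ^ s).map (algebraMap ℝ ℂ) := by
      rw [ha]
      simpa using (map_pow ((algebraMap ℝ ℂ).mapMatrix) M s).symm
    have h4 : ‖(a ^ s) i j‖ ≤ ‖a ^ s‖ := hentry
    rw [hpow] at h4
    rw [hpow]
    simpa [Matrix.map_apply] using h4
  exact squeeze_zero_norm' hnorm
    (tendsto_pow_atTop_nhds_zero_of_lt_one ENNReal.toReal_nonneg hr2')

end PowAux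

lemma lyap_fixed_eq_zero {d : ℕ} {L Y : Matrix (Fin d) (Fin d) ℝ}
    (hL : ∀ i j, Tendsto (fun s : ℕ => (L ^ s) i j) atTop (𝓝 0))
    (hY : Y = Lᵀ * Y * L) : Y = 0 := by
  have key : ∀ s : ℕ, Y = (Lᵀ) ^ s * Y * L ^ s := by
    intro s
    induction s with
    | zero => simp
    | succ n ih =>
      calc Y = (Lᵀ) ^ n * Y * L ^ n := ih
        _ = (Lᵀ) ^ n * (Lᵀ * Y * L) * L ^ n := by conv_lhs => rw [hY]
        _ = (Lᵀ) ^ (n + 1) * Y * L ^ (n + 1) := by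
            rw [pow_succ (Lᵀ) n, pow_succ' L n]; simp only [Matrix.mul_assoc]
  ext i j
  have hconst : Tendsto (fun s : ℕ => ((Lᵀ) ^ s * Y * L ^ s) i j) atTop (𝓝 (Y i j)) := by
    have heq : (fun s : ℕ => ((Lᵀ) ^ s * Y * L ^ s) i j) = fun _ => Y i j := by
      funext s; rw [← key s]
    rw [heq]; exact tendsto_const_nhds
  have h0 : Tendsto (fun s : ℕ => ((Lᵀ) ^ s * Y * L ^ s) i j) atTop (𝓝 0) := by
    have hmain : Tendsto
        (fun s : ℕ => ∑ b : Fin d, (∑ a : Fin d, (L ^ s) a i * Y a b) * (L ^ s) b j)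
        atTop (𝓝 (∑ b : Fin d, (∑ a : Fin d, 0 * Y a b) * 0)) :=
      tendsto_finset_sum _ fun b _ =>
        (tendsto_finset_sum _ fun a _ => (hL a i).mul tendsto_const_nhds).mul (hL b j)
    simp only [zero_mul, mul_zero, Finset.sum_const_zero] at hmain
    have heq : (fun s : ℕ => ((Lᵀ) ^ s * Y * L ^ s) i j)
        = fun s : ℕ => ∑ b : Fin d, (∑ a : Fin d, (L ^ s) a i * Y a b) * (L ^ s) b j := by
      funext s
      simp only [Matrix.mul_apply, ← Matrix.transpose_pow, Matrix.transpose_apply]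
    rw [heq]; exact hmain
  have := tendsto_nhds_unique hconst h0
  simpa using this

theorem lqr_cost_difference_formula {d k : ℕ}
    (A De P P' D' : Matrix (Fin d) (Fin d) ℝ) (Q : Matrix (Fin d) (Fin d) ℝ)
    (R : Matrix (Fin k) (Fin k) ℝ) (B : Matrix (Fin d) (Fin k) ℝ)
    (K K' G : Matrix (Fin k) (Fin d) ℝ) (σ : ℝ)
    (hQ : Q.PosDef) (hR : R.PosDef) (hDe : De.PosSemidef)
    (hK : specRad (A - B * K) < 1) (hK' : specRad (A - B * K') < 1)
    (hP : P = (Q + Kᵀ * R * K) + (A - B * K)ᵀ * P * (A - B * K))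
    (hP' : P' = (Q + K'ᵀ * R * K') + (A - B * K')ᵀ * P' * (A - B * K'))
    (hD' : HasSum (fun s : ℕ => (A - B * K') ^ s * De * ((A - B * K')ᵀ) ^ s) D')
    (hG : G = (R + Bᵀ * P * B) * K - Bᵀ * P * A) :
    ((De * P).trace + σ ^ 2 * R.trace) - ((De * P').trace + σ ^ 2 * R.trace)
      = (D' * ((K - K')ᵀ * G + Gᵀ * (K - K')
          - (K - K')ᵀ * (R + Bᵀ * P * B) * (K - K'))).trace := by
  have hQs : Qᵀ = Q := by
    simpa [Matrix.conjTranspose_eq_transpose_of_trivial] using hQ.1.eq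
  have hRs : Rᵀ = R := by
    simpa [Matrix.conjTranspose_eq_transpose_of_trivial] using hR.1.eq
  have hLt := entry_tendsto_of_specRad_lt_one hK
  have hLt' := entry_tendsto_of_specRad_lt_one hK'
  -- symmetry of P
  have hPs : Pᵀ = P := by
    have hfix : Pᵀ - P = (A - B * K)ᵀ * (Pᵀ - P) * (A - B * K) := by
      have hPt : Pᵀ = (Q + Kᵀ * R * K) + (A - B * K)ᵀ * Pᵀ * (A - B * K) := by
        conv_lhs => rw [hP]
        simp only [Matrix.transpose_add, Matrix.transpose_mul, Matrix.transpose_transpose,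
          hQs, hRs, Matrix.mul_assoc]
      calc Pᵀ - P = ((Q + Kᵀ * R * K) + (A - B * K)ᵀ * Pᵀ * (A - B * K))
            - ((Q + Kᵀ * R * K) + (A - B * K)ᵀ * P * (A - B * K)) := by
            rw [← hPt, ← hP]
        _ = (A - B * K)ᵀ * (Pᵀ - P) * (A - B * K) := by noncomm_ring
    exact sub_eq_zero.mp (lyap_fixed_eq_zero hLt hfix)
  set L' : Matrix (Fin d) (Fin d) ℝ := A - B * K' with hLdef
  set Md : Matrix (Fin d) (Fin d) ℝ := (K - K')ᵀ * G + Gᵀ * (K - K')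
      - (K - K')ᵀ * (R + Bᵀ * P * B) * (K - K') with hMd
  set X : Matrix (Fin d) (Fin d) ℝ := P - P' with hX
  -- key Lyapunov identity
  have hKey : X = Md + L'ᵀ * X * L' := by
    have expand : L'ᵀ * X * L' = L'ᵀ * P * L' - L'ᵀ * P' * L' := by
      rw [hX]; noncomm_ring
    rw [hX, hMd, expand, hG]
    nth_rewrite 1 [hP]
    nth_rewrite 1 [hP']
    rw [hLdef]
    simp only [Matrix.transpose_sub, Matrix.transpose_add, Matrix.transpose_mul,
      Matrix.transpose_transpose, hPs, hRs, Matrix.mul_add, Matrix.add_mul,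
      Matrix.mul_sub, Matrix.sub_mul, Matrix.mul_assoc]
    abel
  -- trace computations
  set f : ℕ → ℝ := fun s => ((L' ^ s * De * (L'ᵀ) ^ s) * Md).trace with hf
  have hsum : HasSum f ((D' * Md).trace) := by
    have cont : Continuous (fun Y : Matrix (Fin d) (Fin d) ℝ => (Y * Md).trace) :=
      (Continuous.matrix_mul continuous_id continuous_const).matrix_trace
    exact hD'.map (AddMonoidHom.mk' (fun Y : Matrix (Fin d) (Fin d) ℝ => (Y * Md).trace)
      (fun Y Z => by simp [Matrix.add_mul, Matrix.trace_add])) cont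
  have hfs : ∀ s : ℕ, f s = (De * ((L'ᵀ) ^ s * Md * L' ^ s)).trace := by
    intro s
    have h1 : (L' ^ s * De * (L'ᵀ) ^ s) * Md = L' ^ s * (De * ((L'ᵀ) ^ s * Md)) := by
      simp only [Matrix.mul_assoc]
    simp only [hf]
    rw [h1, Matrix.trace_mul_comm]
    congr 1
    simp only [Matrix.mul_assoc]
  have hpartial : ∀ N : ℕ, ∑ s ∈ Finset.range N, (L'ᵀ) ^ s * Md * L' ^ s
      = X - (L'ᵀ) ^ N * X * L' ^ N := by
    intro N
    induction N with
    | zero => simp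
    | succ n ih =>
      rw [Finset.sum_range_succ, ih]
      have e : (L'ᵀ) ^ (n + 1) * X * L' ^ (n + 1) = (L'ᵀ) ^ n * (L'ᵀ * X * L') * L' ^ n := by
        rw [pow_succ (L'ᵀ) n, pow_succ' L' n]
        simp only [Matrix.mul_assoc]
      have e2 : (L'ᵀ) ^ n * X * L' ^ n
          = (L'ᵀ) ^ n * Md * L' ^ n + (L'ᵀ) ^ (n + 1) * X * L' ^ (n + 1) := by
        rw [e]
        nth_rewrite 1 [hKey]
        simp only [Matrix.add_mul, Matrix.mul_add]
      rw [e2]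
      abel
  have hptrace : ∀ N : ℕ, ∑ s ∈ Finset.range N, f s
      = (De * X).trace - (De * ((L'ᵀ) ^ N * X * L' ^ N)).trace := by
    intro N
    calc ∑ s ∈ Finset.range N, f s
        = ∑ s ∈ Finset.range N, (De * ((L'ᵀ) ^ s * Md * L' ^ s)).trace := by
          exact Finset.sum_congr rfl fun s _ => hfs s
      _ = (∑ s ∈ Finset.range N, De * ((L'ᵀ) ^ s * Md * L' ^ s)).trace := by
          rw [Matrix.trace_sum]
      _ = (De * ∑ s ∈ Finset.range N, (L'ᵀ) ^ s * Md * L' ^ s).trace := by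
          rw [Finset.mul_sum]
      _ = (De * X).trace - (De * ((L'ᵀ) ^ N * X * L' ^ N)).trace := by
          rw [hpartial N, Matrix.mul_sub, Matrix.trace_sub]
  have hpow0 : Tendsto (fun N : ℕ => L' ^ N) atTop (𝓝 0) := by
    refine tendsto_pi_nhds.mpr ?_
    intro i
    rw [tendsto_pi_nhds]
    intro j
    simpa using hLt' i j
  have htail : Tendsto (fun N : ℕ => (De * ((L'ᵀ) ^ N * X * L' ^ N)).trace) atTop (𝓝 0) := by
    have cont : Continuous (fun Z : Matrix (Fin d) (Fin d) ℝ => (De * (Zᵀ * X * Z)).trace) :=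
      (Continuous.matrix_mul continuous_const
        (Continuous.matrix_mul
          (Continuous.matrix_mul (Continuous.matrix_transpose continuous_id) continuous_const)
          continuous_id)).matrix_trace
    have := (cont.tendsto 0).comp hpow0
    simp only [Function.comp_def, Matrix.transpose_pow] at this ⊢
    simpa using this
  have t1 : Tendsto (fun N : ℕ => ∑ s ∈ Finset.range N, f s) atTop (𝓝 ((D' * Md).trace)) :=
    hsum.tendsto_sum_nat
  have t2 : Tendsto (fun N : ℕ => ∑ s ∈ Finset.range N, f s) atTop
      (𝓝 ((De * X).trace - 0)) := by
    simp only [hptrace]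
    exact tendsto_const_nhds.sub htail
  have hmain : (De * X).trace - 0 = (D' * Md).trace := tendsto_nhds_unique t2 t1
  have hDX : (De * P).trace - (De * P').trace = (De * X).trace := by
    rw [hX, Matrix.mul_sub, Matrix.trace_sub]
  linarith [hmain, hDX]
end

section
/- Suppose K, K' ∈ ℝ^{k×d} satisfy ‖K‖,‖K'‖ ≤ c_K, ‖A−BK‖,‖A−BK'‖ ≤ c_A, ρ(A−BK),ρ(A−BK') ≤ ρ < 1, and let P_K, P_{K'} solve the respective Stein equations P = Q + KᵀRK + (A−BK)ᵀP(A−BK). Then P_K − P_{K'} − (A−BK)ᵀ(P_K − P_{K'})(A−BK') = KᵀR(K−K') + (K−K')ᵀRK' − (A−BK)ᵀP_K B(K−K') − (K−K')ᵀBᵀP_{K'}(A−BK'). -/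
open Matrix Filter MeasureTheory ProbabilityTheory

open scoped Matrix.Norms.L2Operator in
theorem stein_solution_difference_identity {d k : ℕ}
    (A PK PK' : Matrix (Fin d) (Fin d) ℝ) (Q : Matrix (Fin d) (Fin d) ℝ)
    (R : Matrix (Fin k) (Fin k) ℝ) (B : Matrix (Fin d) (Fin k) ℝ)
    (K K' : Matrix (Fin k) (Fin d) ℝ) (cK cA : ℝ) (ρ : ENNReal)
    (hQ : Q.PosDef) (hR : R.PosDef)
    (hKn : ‖K‖ ≤ cK) (hK'n : ‖K'‖ ≤ cK)
    (hAn : ‖A - B * K‖ ≤ cA) (hA'n : ‖A - B * K'‖ ≤ cA)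
    (hρ : ρ < 1)
    (hKr : specRad (A - B * K) ≤ ρ) (hK'r : specRad (A - B * K') ≤ ρ)
    (hPK : PK = (Q + Kᵀ * R * K) + (A - B * K)ᵀ * PK * (A - B * K))
    (hPK' : PK' = (Q + K'ᵀ * R * K') + (A - B * K')ᵀ * PK' * (A - B * K')) :
    PK - PK' - (A - B * K)ᵀ * (PK - PK') * (A - B * K')
      = Kᵀ * R * (K - K') + (K - K')ᵀ * R * K'
        - (A - B * K)ᵀ * PK * B * (K - K')
        - (K - K')ᵀ * Bᵀ * PK' * (A - B * K') := by
  nth_rewrite 1 [hPK]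
  nth_rewrite 1 [hPK']
  simp only [Matrix.transpose_sub, Matrix.transpose_add, Matrix.transpose_mul,
    Matrix.transpose_transpose, sub_eq_add_neg, Matrix.add_mul, Matrix.mul_add,
    Matrix.neg_mul, Matrix.mul_neg, Matrix.mul_assoc, neg_add, neg_neg, Matrix.transpose_neg]
  abel
end
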